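/- For the entropy-regularized Gelbrich divergence, as ε → 0 it converges to the squared Gelbrich (Bures–Wasserstein) distance: G_ε(Σ₁,Σ₂) → Tr(Σ₁) + Tr(Σ₂) − 2Tr((Σ₁^{1/2}Σ₂Σ₁^{1/2})^{1/2}). -/

import Mathlib

/-- The PSD square root of a PSD matrix, as `Matrix.PosSemidef.sqrt` was defined in older Mathlib. -/
noncomputable def Matrix.PosSemidef.sqrt {n : Type*} [Fintype n] [DecidableEq n]
    {A : Matrix n n ℝ} (hA : A.PosSemidef) : Matrix n n ℝ :=
  (hA.1.eigenvectorUnitary : Matrix n n ℝ) * Matrix.diagonal ((↑) ∘ Real.sqrt ∘ hA.1.eigenvalues)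
    * (star hA.1.eigenvectorUnitary : Matrix n n ℝ)

open Matrix Filter

theorem mylog_bd {x : ℝ} (hx : 0 ≤ x) : Real.log (1 + x) ≤ 2 * Real.sqrt x := by
  have h0 : (0:ℝ) < 1 + x := by linarith
  have h1 : Real.log (1 + x) = 2 * Real.log (Real.sqrt (1 + x)) := by
    rw [Real.log_sqrt (by linarith)]; ring
  have h2 : Real.log (Real.sqrt (1 + x)) ≤ Real.sqrt (1 + x) - 1 :=
    Real.log_le_sub_one_of_pos (Real.sqrt_pos.mpr h0)
  have h3 : Real.sqrt (1 + x) ≤ 1 + Real.sqrt x := by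
    have := Real.sqrt_le_sqrt (show 1 + x ≤ (1 + Real.sqrt x)^2 by
      nlinarith [Real.sq_sqrt hx, Real.sqrt_nonneg x])
    rwa [Real.sqrt_sq (by positivity)] at this
  linarith

theorem sq_term_tendsto (m : ℝ) (hm : 0 ≤ m) :
    Tendsto (fun ε : ℝ => (ε/2) * Real.log ((2/ε) * (Real.sqrt (m + ε^2/16) + ε/4)))
      (nhdsWithin 0 (Set.Ioi 0)) (nhds 0) := by
  set a : ℝ := 2 * Real.sqrt m with ha
  have ha0 : 0 ≤ a := by positivity
  apply squeeze_zero' (g := fun ε => Real.sqrt a * Real.sqrt ε)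
  · filter_upwards [self_mem_nhdsWithin] with ε hε
    have hε0 : (0:ℝ) < ε := hε
    have hlow : ε/4 ≤ Real.sqrt (m + ε^2/16) := by
      have : Real.sqrt ((ε/4)^2) ≤ Real.sqrt (m + ε^2/16) :=
        Real.sqrt_le_sqrt (by nlinarith)
      rwa [Real.sqrt_sq (by positivity)] at this
    have hg1 : (1:ℝ) ≤ (2/ε) * (Real.sqrt (m + ε^2/16) + ε/4) := by
      have : (2/ε) * (ε/4 + ε/4) ≤ (2/ε) * (Real.sqrt (m + ε^2/16) + ε/4) := by
        apply mul_le_mul_of_nonneg_left (by linarith) (by positivity)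
      calc (1:ℝ) = (2/ε) * (ε/4 + ε/4) := by field_simp; ring
        _ ≤ _ := this
    have := Real.log_nonneg hg1
    positivity
  · filter_upwards [self_mem_nhdsWithin] with ε hε
    have hε0 : (0:ℝ) < ε := hε
    have hup : Real.sqrt (m + ε^2/16) ≤ Real.sqrt m + ε/4 := by
      have := Real.sqrt_le_sqrt (show m + ε^2/16 ≤ (Real.sqrt m + ε/4)^2 by
        nlinarith [Real.sq_sqrt hm, Real.sqrt_nonneg m])
      rwa [Real.sqrt_sq (by positivity)] at this
    have hg : (2/ε) * (Real.sqrt (m + ε^2/16) + ε/4) ≤ 1 + a/ε := by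
      have h : (2/ε) * (Real.sqrt (m + ε^2/16) + ε/4) ≤ (2/ε) * (Real.sqrt m + ε/2) := by
        apply mul_le_mul_of_nonneg_left (by linarith) (by positivity)
      calc (2/ε) * (Real.sqrt (m + ε^2/16) + ε/4) ≤ (2/ε) * (Real.sqrt m + ε/2) := h
        _ = 1 + a/ε := by field_simp [ha]; ring
    have hgpos : (0:ℝ) < (2/ε) * (Real.sqrt (m + ε^2/16) + ε/4) := by positivity
    have hlog : Real.log ((2/ε) * (Real.sqrt (m + ε^2/16) + ε/4)) ≤ 2 * Real.sqrt (a/ε) := by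
      calc Real.log ((2/ε) * (Real.sqrt (m + ε^2/16) + ε/4)) ≤ Real.log (1 + a/ε) :=
            Real.log_le_log hgpos hg
        _ ≤ 2 * Real.sqrt (a/ε) := mylog_bd (by positivity)
    have key : (ε/2) * (2 * Real.sqrt (a/ε)) = Real.sqrt a * Real.sqrt ε := by
      rw [Real.sqrt_div ha0]
      calc (ε/2) * (2 * (Real.sqrt a / Real.sqrt ε)) = Real.sqrt a * (ε / Real.sqrt ε) := by ring
        _ = Real.sqrt a * Real.sqrt ε := by rw [Real.div_sqrt]
    calc (ε/2) * Real.log ((2/ε) * (Real.sqrt (m + ε^2/16) + ε/4))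
        ≤ (ε/2) * (2 * Real.sqrt (a/ε)) := by
          apply mul_le_mul_of_nonneg_left hlog (by positivity)
      _ = Real.sqrt a * Real.sqrt ε := key
  · have : Tendsto (fun ε : ℝ => Real.sqrt a * Real.sqrt ε) (nhds 0)
        (nhds (Real.sqrt a * Real.sqrt 0)) :=
      (continuous_const.mul Real.continuous_sqrt).tendsto 0
    simpa using this.mono_left nhdsWithin_le_nhds

/-- As `ε → 0⁺`, the entropy-regularized Gelbrich divergence converges to the
squared Gelbrich (Bures–Wasserstein) distance. Here `D ε` denotes the PSD
square root of `Σ₁^{1/2} Σ₂ Σ₁^{1/2} + (ε²/16) I` (characterized by being PSD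
with the right square), so that `D 0 = (Σ₁^{1/2} Σ₂ Σ₁^{1/2})^{1/2}`. -/
theorem tendsto_Gelbrich_eps {d : ℕ}
    {S S₁ S₂ : Matrix (Fin d) (Fin d) ℝ}
    (hS : S.PosDef) (h₁ : S₁.PosDef) (h₂ : S₂.PosDef)
    (D : ℝ → Matrix (Fin d) (Fin d) ℝ)
    (hD : ∀ ε, (D ε).PosSemidef)
    (hDsq : ∀ ε, D ε * D ε =
      Matrix.PosSemidef.sqrt h₁.posSemidef * S₂ * Matrix.PosSemidef.sqrt h₁.posSemidef
        + (ε ^ 2 / 16) • (1 : Matrix (Fin d) (Fin d) ℝ)) :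
    Filter.Tendsto
      (fun ε : ℝ =>
        S₁.trace + S₂.trace - 2 * (D ε).trace
          + (ε / 2) * (S⁻¹ * S₂).trace
          + (ε / 2) * Real.log (S.det / S₂.det)
          + (ε / 2) * Real.log ((2 / ε) ^ d
              * (D ε + (ε / 4) • (1 : Matrix (Fin d) (Fin d) ℝ)).det))
      (nhdsWithin 0 (Set.Ioi 0))
      (nhds (S₁.trace + S₂.trace - 2 * (D 0).trace)) := by
  classical
  set M : Matrix (Fin d) (Fin d) ℝ := Matrix.PosSemidef.sqrt h₁.posSemidef * S₂ * Matrix.PosSemidef.sqrt h₁.posSemidef with hMdef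
  have hM : M.PosSemidef := by
    have := h₂.posSemidef.mul_mul_conjTranspose_same (Matrix.PosSemidef.sqrt h₁.posSemidef)
    have hsqH : (Matrix.PosSemidef.sqrt h₁.posSemidef)ᴴ = Matrix.PosSemidef.sqrt h₁.posSemidef := by
      unfold Matrix.PosSemidef.sqrt
      simp [Matrix.conjTranspose_mul, Matrix.mul_assoc, Matrix.star_eq_conjTranspose,
        Matrix.conjTranspose_eq_transpose_of_trivial]
    rwa [hsqH] at this
  set U : Matrix (Fin d) (Fin d) ℝ := (hM.1.eigenvectorUnitary : Matrix (Fin d) (Fin d) ℝ)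
    with hUdef
  set μ : Fin d → ℝ := hM.1.eigenvalues with hμdef
  have hμ0 : ∀ i, 0 ≤ μ i := fun i => hM.eigenvalues_nonneg i
  have hU1 : U * star U = 1 := mem_unitaryGroup_iff.mp (hM.1.eigenvectorUnitary).2
  have hU2 : star U * U = 1 := mem_unitaryGroup_iff'.mp (hM.1.eigenvectorUnitary).2
  set conj : (Fin d → ℝ) → Matrix (Fin d) (Fin d) ℝ :=
    fun f => U * diagonal f * star U with hconj
  have hspec : M = conj μ := by
    have := hM.1.spectral_theorem
    simpa [hconj, Function.comp, RCLike.ofReal] using this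
  have hmul : ∀ f g, conj f * conj g = conj (fun i => f i * g i) := by
    intro f g
    simp only [hconj]
    simp only [Matrix.mul_assoc]
    rw [← Matrix.mul_assoc (star U) U, hU2, Matrix.one_mul,
      ← Matrix.mul_assoc (diagonal f), diagonal_mul_diagonal]
  have hadd : ∀ f g, conj f + conj g = conj (fun i => f i + g i) := by
    intro f g
    simp only [hconj, ← diagonal_add]
    rw [Matrix.mul_add U (diagonal f) (diagonal g), Matrix.add_mul]
  have hsmul1 : ∀ c : ℝ, (c • (1 : Matrix (Fin d) (Fin d) ℝ)) = conj (fun _ => c) := by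
    intro c
    have h : U * diagonal (fun _ : Fin d => c) * star U
        = U * (c • (1 : Matrix (Fin d) (Fin d) ℝ)) * star U := by
      rw [smul_one_eq_diagonal]
    simp only [hconj]
    rw [h, Matrix.mul_smul, Matrix.smul_mul, Matrix.mul_one, hU1]
  have htrace : ∀ f, (conj f).trace = ∑ i, f i := by
    intro f
    rw [hconj]
    rw [trace_mul_cycle, hU2, Matrix.one_mul, trace_diagonal]
  have hdet : ∀ f, (conj f).det = ∏ i, f i := by
    intro f
    rw [hconj, det_mul, det_mul, mul_comm, ← mul_assoc, mul_comm (det (star U)), ← det_mul, hU1,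
      det_one, one_mul, det_diagonal]
  have hpsd : ∀ f, (∀ i, 0 ≤ f i) → (conj f).PosSemidef := by
    intro f hf
    have := (posSemidef_diagonal_iff.mpr hf).mul_mul_conjTranspose_same U
    rwa [← star_eq_conjTranspose] at this
  -- explicit description of D ε
  have hDconj : ∀ ε : ℝ, D ε = conj (fun i => Real.sqrt (μ i + ε^2/16)) := by
    intro ε
    open scoped MatrixOrder in
    apply (CFC.sq_eq_sq_iff (A := Matrix (Fin d) (Fin d) ℝ) _ _ (Matrix.nonneg_iff_posSemidef.mpr (hD ε))
      (Matrix.nonneg_iff_posSemidef.mpr (hpsd _ fun i => Real.sqrt_nonneg _))).mp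
    rw [pow_two, pow_two, hDsq ε, hmul, hspec, hsmul1 (ε^2/16), hadd]
    refine congrArg conj (funext fun i => ?_)
    exact (Real.mul_self_sqrt (by have := hμ0 i; positivity)).symm
  have htrD : ∀ ε : ℝ, (D ε).trace = ∑ i, Real.sqrt (μ i + ε^2/16) := by
    intro ε; rw [hDconj ε, htrace]
  have hdetD : ∀ ε : ℝ, (D ε + (ε/4) • (1 : Matrix (Fin d) (Fin d) ℝ)).det
      = ∏ i, (Real.sqrt (μ i + ε^2/16) + ε/4) := by
    intro ε; rw [hDconj ε, hsmul1 (ε/4), hadd, hdet]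
  -- the limit point
  rw [show (D 0).trace = ∑ i, Real.sqrt (μ i + (0:ℝ)^2/16) from htrD 0]
  set l := nhdsWithin (0:ℝ) (Set.Ioi 0) with hl
  set c₁ : ℝ := (S⁻¹ * S₂).trace
  set c₂ : ℝ := Real.log (S.det / S₂.det)
  set A : ℝ := S₁.trace + S₂.trace
  -- convergence of the nice form
  have T1 : Tendsto (fun ε : ℝ => A - 2 * ∑ i, Real.sqrt (μ i + ε^2/16)) l
      (nhds (A - 2 * ∑ i, Real.sqrt (μ i + (0:ℝ)^2/16))) := by
    have hc : Continuous (fun ε : ℝ => A - 2 * ∑ i, Real.sqrt (μ i + ε^2/16)) := by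
      apply continuous_const.sub
      apply continuous_const.mul
      apply continuous_finset_sum
      intro i _
      exact Real.continuous_sqrt.comp (continuous_const.add ((continuous_pow 2).div_const 16))
    exact (hc.tendsto 0).mono_left nhdsWithin_le_nhds
  have T2 : Tendsto (fun ε : ℝ => (ε/2) * c₁) l (nhds 0) := by
    have := (show Continuous (fun ε : ℝ => (ε/2) * c₁) from
      (continuous_id.div_const 2).mul (continuous_const (y := c₁))).tendsto 0
    simpa using this.mono_left nhdsWithin_le_nhds
  have T3 : Tendsto (fun ε : ℝ => (ε/2) * c₂) l (nhds 0) := by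
    have := (show Continuous (fun ε : ℝ => (ε/2) * c₂) from
      (continuous_id.div_const 2).mul (continuous_const (y := c₂))).tendsto 0
    simpa using this.mono_left nhdsWithin_le_nhds
  have T4 : Tendsto (fun ε : ℝ =>
      (ε/2) * ∑ i, Real.log ((2/ε) * (Real.sqrt (μ i + ε^2/16) + ε/4))) l (nhds 0) := by
    have heq : (fun ε : ℝ =>
        (ε/2) * ∑ i, Real.log ((2/ε) * (Real.sqrt (μ i + ε^2/16) + ε/4)))
        = fun ε : ℝ => ∑ i, (ε/2) * Real.log ((2/ε) * (Real.sqrt (μ i + ε^2/16) + ε/4)) := by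
      funext ε; rw [Finset.mul_sum]
    rw [heq]
    have := tendsto_finset_sum (Finset.univ : Finset (Fin d))
      (fun i _ => sq_term_tendsto (μ i) (hμ0 i))
    simpa using this
  have TG := ((T1.add T2).add T3).add T4
  simp only [add_zero] at TG
  apply TG.congr'
  filter_upwards [self_mem_nhdsWithin] with ε hε
  have hε0 : (0:ℝ) < ε := hε
  rw [htrD ε, hdetD ε]
  have hprod : (2/ε)^d * ∏ i, (Real.sqrt (μ i + ε^2/16) + ε/4)
      = ∏ i, ((2/ε) * (Real.sqrt (μ i + ε^2/16) + ε/4)) := by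
    rw [Finset.prod_mul_distrib, Finset.prod_const, Finset.card_univ, Fintype.card_fin]
  rw [hprod, Real.log_prod]
  intro i _
  have : (0:ℝ) < (2/ε) * (Real.sqrt (μ i + ε^2/16) + ε/4) := by positivity
  exact ne_of_gt this
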